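/- Let X ∈ ℂ^{m×n}, Y ∈ ℂ^{m×n'}, and let Σ̄ be the truncated (r, ε, φ)-approximate importance sketch of X (rows with index in Γ zeroed out). Then for any δ > 0, with probability at least 1 − δ, ‖X† Σ̄† Σ̄ Y − X† Y‖_F ≤ (2√(2ε) + √(2/(rδ)))·√φ·‖X‖_F·‖Y‖_F. -/

import Mathlib

open Finset Matrix

/-- Euclidean norm of row `i` of a matrix. -/
noncomputable def rowNorm {m n : ℕ} (A : Matrix (Fin m) (Fin n) ℂ) (i : Fin m) : ℝ :=
  Real.sqrt (∑ j, ‖A i j‖ ^ 2)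

/-- Frobenius norm of a matrix. -/
noncomputable def frobNorm {m n : ℕ} (A : Matrix (Fin m) (Fin n) ℂ) : ℝ :=
  Real.sqrt (∑ i, ∑ j, ‖A i j‖ ^ 2)

/-- The truncated sketch matrix: row `i` equals `e_{s i}/√(r·p(s i))` when `p (s i) > 0` and
the sampled index `s i` does not lie in the truncation set `Γ`, and is zero otherwise. -/
noncomputable def truncSketch {m : ℕ} (r : ℕ) (p : Fin m → ℝ) (Γ : Fin m → Prop)
    [DecidablePred Γ] (s : Fin r → Fin m) : Matrix (Fin r) (Fin m) ℂ :=
  Matrix.of fun i j =>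
    if j = s i ∧ 0 < p (s i) ∧ ¬ Γ (s i) then ((1 / Real.sqrt (r * p (s i)) : ℝ) : ℂ) else 0

section Helpers

variable {R : Type*} [CommSemiring R] {r m : ℕ}

lemma exp_prod (q : Fin m → R) (h : Fin r → Fin m → R) :
    ∑ s : Fin r → Fin m, ∏ i, (q (s i) * h i (s i)) = ∏ i, ∑ j, q j * h i j := by
  rw [Fintype.prod_sum]

lemma exp_single (q : Fin m → R) (hq : ∑ j, q j = 1) (i : Fin r) (f : Fin m → R) :
    ∑ s : Fin r → Fin m, (∏ i', q (s i')) * f (s i) = ∑ j, q j * f j := by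
  have key := exp_prod q (fun i' => if i' = i then f else fun _ => 1)
  simp only [ite_apply] at key
  calc ∑ s : Fin r → Fin m, (∏ i', q (s i')) * f (s i)
      = ∑ s : Fin r → Fin m, ∏ i', (q (s i') * (if i' = i then f (s i') else 1)) := by
        refine Finset.sum_congr rfl fun s _ => ?_
        rw [Finset.prod_mul_distrib, Finset.prod_ite_eq' Finset.univ i (fun i' => f (s i'))]
        simp
    _ = ∏ i', ∑ j, q j * (if i' = i then f j else 1) := key
    _ = ∑ j, q j * f j := by
        rw [Finset.prod_eq_single i]
        · simp
        · intro b _ hb; simp [hb, hq]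
        · simp

lemma exp_pair (q : Fin m → R) (hq : ∑ j, q j = 1) {i i' : Fin r} (hne : i ≠ i')
    (f g : Fin m → R) :
    ∑ s : Fin r → Fin m, (∏ i'', q (s i'')) * (f (s i) * g (s i'))
      = (∑ j, q j * f j) * (∑ j, q j * g j) := by
  have key := exp_prod q (fun i'' => if i'' = i then f else if i'' = i' then g else fun _ => 1)
  simp only [ite_apply] at key
  calc ∑ s : Fin r → Fin m, (∏ i'', q (s i'')) * (f (s i) * g (s i'))
      = ∑ s : Fin r → Fin m,
          ∏ i'', (q (s i'') * (if i'' = i then f (s i'') else if i'' = i' then g (s i'') else 1)) := by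
        refine Finset.sum_congr rfl fun s _ => ?_
        rw [Finset.prod_mul_distrib]
        congr 1
        rw [Finset.prod_eq_mul_prod_sdiff_singleton_of_mem (Finset.mem_univ i)
          (fun i'' => if i'' = i then f (s i'') else if i'' = i' then g (s i'') else 1)]
        have hi' : i' ∈ Finset.univ \ {i} := by simp [hne.symm]
        rw [Finset.prod_eq_mul_prod_sdiff_singleton_of_mem hi']
        have : ∀ x ∈ (Finset.univ \ {i}) \ {i'},
            (if x = i then f (s x) else if x = i' then g (s x) else 1) = 1 := by
          intro x hx
          simp only [Finset.mem_sdiff, Finset.mem_singleton] at hx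
          simp [hx.1.2, hx.2]
        rw [Finset.prod_congr rfl this]
        simp [hne, hne.symm]
    _ = ∏ i'', ∑ j, q j * (if i'' = i then f j else if i'' = i' then g j else 1) := key
    _ = (∑ j, q j * f j) * (∑ j, q j * g j) := by
        rw [Finset.prod_eq_mul_prod_sdiff_singleton_of_mem (Finset.mem_univ i)]
        have hi' : i' ∈ Finset.univ \ {i} := by simp [hne.symm]
        rw [Finset.prod_eq_mul_prod_sdiff_singleton_of_mem hi']
        have : ∀ x ∈ (Finset.univ \ {i}) \ {i'},
            (∑ j, q j * (if x = i then f j else if x = i' then g j else 1)) = 1 := by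
          intro x hx
          simp only [Finset.mem_sdiff, Finset.mem_singleton] at hx
          simp [hx.1.2, hx.2, hq]
        rw [Finset.prod_congr rfl this]
        simp [hne, hne.symm]

end Helpers

lemma sum_swap_3 {u v w : ℕ} {M : Type*} [AddCommMonoid M] (f : Fin u → Fin v → Fin w → M) :
    ∑ a, ∑ b, ∑ j, f a b j = ∑ j, ∑ a, ∑ b, f a b j := by
  have h1 : ∀ a, ∑ b, ∑ j, f a b j = ∑ j, ∑ b, f a b j := fun a => Finset.sum_comm
  rw [Finset.sum_congr rfl fun a _ => h1 a]
  exact Finset.sum_comm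

lemma second_moment {r m n n' : ℕ} (q : Fin m → ℂ) (hq : ∑ j, q j = 1)
    (B : Fin m → Fin n → Fin n' → ℂ)
    (hB0 : ∀ a b, ∑ j, q j * B j a b = 0)
    (hB0' : ∀ a b, ∑ j, q j * starRingEnd ℂ (B j a b) = 0) :
    ∑ s : Fin r → Fin m, (∏ i, q (s i)) *
        (∑ a, ∑ b, starRingEnd ℂ (∑ i, B (s i) a b) * (∑ i, B (s i) a b))
      = (r : ℂ) * ∑ j, q j * ∑ a, ∑ b, starRingEnd ℂ (B j a b) * B j a b := by
  calc ∑ s : Fin r → Fin m, (∏ i, q (s i)) *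
        (∑ a, ∑ b, starRingEnd ℂ (∑ i, B (s i) a b) * (∑ i, B (s i) a b))
      = ∑ s : Fin r → Fin m, ∑ a, ∑ b, ∑ i, ∑ i',
          (∏ i'', q (s i'')) * (starRingEnd ℂ (B (s i) a b) * B (s i') a b) := by
        refine Finset.sum_congr rfl fun s _ => ?_
        rw [Finset.mul_sum]; refine Finset.sum_congr rfl fun a _ => ?_
        rw [Finset.mul_sum]; refine Finset.sum_congr rfl fun b _ => ?_
        rw [map_sum, Finset.sum_mul_sum, Finset.mul_sum]
        refine Finset.sum_congr rfl fun i _ => ?_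
        rw [Finset.mul_sum]
    _ = ∑ a, ∑ b, ∑ i, ∑ i', ∑ s : Fin r → Fin m,
          (∏ i'', q (s i'')) * (starRingEnd ℂ (B (s i) a b) * B (s i') a b) := by
        rw [Finset.sum_comm]
        refine Finset.sum_congr rfl fun a _ => ?_
        rw [Finset.sum_comm]
        refine Finset.sum_congr rfl fun b _ => ?_
        rw [Finset.sum_comm]
        refine Finset.sum_congr rfl fun i _ => ?_
        rw [Finset.sum_comm]
    _ = ∑ a, ∑ b, ∑ i : Fin r, ∑ i' : Fin r,
          (if i = i' then ∑ j, q j * (starRingEnd ℂ (B j a b) * B j a b) else 0) := by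
        refine Finset.sum_congr rfl fun a _ => Finset.sum_congr rfl fun b _ =>
          Finset.sum_congr rfl fun i _ => Finset.sum_congr rfl fun i' _ => ?_
        by_cases h : i = i'
        · subst h
          rw [if_pos rfl]
          exact exp_single q hq i (fun j => starRingEnd ℂ (B j a b) * B j a b)
        · rw [if_neg h, exp_pair q hq h (fun j => starRingEnd ℂ (B j a b)) (fun j => B j a b),
            hB0, hB0']
          ring
    _ = ∑ a, ∑ b, (r : ℂ) * ∑ j, q j * (starRingEnd ℂ (B j a b) * B j a b) := by
        refine Finset.sum_congr rfl fun a _ => Finset.sum_congr rfl fun b _ => ?_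
        rw [Finset.sum_congr rfl fun i (_ : i ∈ Finset.univ) =>
          Finset.sum_ite_eq Finset.univ i (fun _ => ∑ j, q j * (starRingEnd ℂ (B j a b) * B j a b))]
        simp [Finset.sum_const, Finset.card_univ, nsmul_eq_mul]
    _ = (r : ℂ) * ∑ j, q j * ∑ a, ∑ b, starRingEnd ℂ (B j a b) * B j a b := by
        simp only [← Finset.mul_sum]
        congr 1
        rw [sum_swap_3 (fun a b j => q j * (starRingEnd ℂ (B j a b) * B j a b))]
        simp only [← Finset.mul_sum]

noncomputable def sampA {m n n' : ℕ} (X : Matrix (Fin m) (Fin n) ℂ) (Y : Matrix (Fin m) (Fin n') ℂ)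
    (p : Fin m → ℝ) (Γ : Fin m → Prop) [DecidablePred Γ] (j : Fin m) (a : Fin n) (b : Fin n') : ℂ :=
  if 0 < p j ∧ ¬ Γ j then (((p j)⁻¹ : ℝ) : ℂ) * (starRingEnd ℂ (X j a) * Y j b) else 0

lemma sketch_apply {m n n' r : ℕ} (X : Matrix (Fin m) (Fin n) ℂ) (Y : Matrix (Fin m) (Fin n') ℂ)
    (p : Fin m → ℝ) (Γ : Fin m → Prop) [DecidablePred Γ] (s : Fin r → Fin m)
    (a : Fin n) (b : Fin n') :
    (Xᴴ * (truncSketch r p Γ s)ᴴ * (truncSketch r p Γ s * Y)) a b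
      = (r : ℂ)⁻¹ * ∑ i, sampA X Y p Γ (s i) a b := by
  have hL : ∀ i : Fin r, (Xᴴ * (truncSketch r p Γ s)ᴴ) a i
      = if 0 < p (s i) ∧ ¬ Γ (s i)
          then starRingEnd ℂ (X (s i) a) * ((1 / Real.sqrt (r * p (s i)) : ℝ) : ℂ) else 0 := by
    intro i
    rw [Matrix.mul_apply]
    have : ∀ j, Xᴴ a j * (truncSketch r p Γ s)ᴴ j i
        = if j = s i then (if 0 < p (s i) ∧ ¬ Γ (s i)
            then starRingEnd ℂ (X j a) * ((1 / Real.sqrt (r * p (s i)) : ℝ) : ℂ) else 0) else 0 := by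
      intro j
      simp only [conjTranspose_apply, truncSketch, Matrix.of_apply]
      by_cases h1 : j = s i <;> by_cases h2 : 0 < p (s i) ∧ ¬ Γ (s i) <;>
        simp [h1, h2, Complex.conj_ofReal]
    rw [Finset.sum_congr rfl fun j _ => this j, Finset.sum_ite_eq' Finset.univ (s i)]
    simp
  have hR : ∀ i : Fin r, (truncSketch r p Γ s * Y) i b
      = if 0 < p (s i) ∧ ¬ Γ (s i)
          then ((1 / Real.sqrt (r * p (s i)) : ℝ) : ℂ) * Y (s i) b else 0 := by
    intro i
    rw [Matrix.mul_apply]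
    have : ∀ k, truncSketch r p Γ s i k * Y k b
        = if k = s i then (if 0 < p (s i) ∧ ¬ Γ (s i)
            then ((1 / Real.sqrt (r * p (s i)) : ℝ) : ℂ) * Y k b else 0) else 0 := by
      intro k
      simp only [truncSketch, Matrix.of_apply]
      by_cases h1 : k = s i <;> by_cases h2 : 0 < p (s i) ∧ ¬ Γ (s i) <;> simp [h1, h2]
    rw [Finset.sum_congr rfl fun k _ => this k, Finset.sum_ite_eq' Finset.univ (s i)]
    simp
  rw [Matrix.mul_apply, Finset.mul_sum]
  refine Finset.sum_congr rfl fun i _ => ?_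
  rw [hL i, hR i]
  by_cases h2 : 0 < p (s i) ∧ ¬ Γ (s i)
  · simp only [h2, if_true, sampA, if_pos h2]
    have hrp : (0:ℝ) ≤ (r : ℝ) * p (s i) :=
      mul_nonneg (Nat.cast_nonneg r) (le_of_lt h2.1)
    have hreal : (1 / Real.sqrt ((r:ℝ) * p (s i))) * (1 / Real.sqrt ((r:ℝ) * p (s i)))
        = (r : ℝ)⁻¹ * (p (s i))⁻¹ := by
      rw [div_mul_div_comm, Real.mul_self_sqrt hrp, one_mul, one_div, mul_inv]
    calc starRingEnd ℂ (X (s i) a) * ((1 / Real.sqrt (r * p (s i)) : ℝ) : ℂ)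
          * (((1 / Real.sqrt (r * p (s i)) : ℝ) : ℂ) * Y (s i) b)
        = (((1 / Real.sqrt ((r:ℝ) * p (s i))) * (1 / Real.sqrt ((r:ℝ) * p (s i))) : ℝ) : ℂ)
            * (starRingEnd ℂ (X (s i) a) * Y (s i) b) := by push_cast; ring
      _ = (r : ℂ)⁻¹ * ((((p (s i))⁻¹ : ℝ) : ℂ) * (starRingEnd ℂ (X (s i) a) * Y (s i) b)) := by
          rw [hreal]; push_cast; ring
  · simp [h2, sampA]

noncomputable def vecE {u v : ℕ} (M : Fin u → Fin v → ℂ) : EuclideanSpace ℂ (Fin u × Fin v) :=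
  (WithLp.equiv 2 ((Fin u × Fin v) → ℂ)).symm (fun x => M x.1 x.2)

lemma vecE_norm {u v : ℕ} (M : Fin u → Fin v → ℂ) :
    ‖vecE M‖ = Real.sqrt (∑ a, ∑ b, ‖M a b‖ ^ 2) := by
  rw [EuclideanSpace.norm_eq]
  congr 1
  rw [Fintype.sum_prod_type]
  rfl

lemma vecE_sub {u v : ℕ} (M N : Fin u → Fin v → ℂ) :
    vecE (fun a b => M a b - N a b) = vecE M - vecE N := rfl

lemma vecE_sum {u v k : ℕ} (f : Fin k → Fin u → Fin v → ℂ) :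
    vecE (fun a b => ∑ j, f j a b) = ∑ j, vecE (f j) := by
  ext x
  rw [show ((∑ j, vecE (f j)) x = ∑ j, vecE (f j) x) from by
    induction (Finset.univ : Finset (Fin k)) using Finset.induction_on with
    | empty => rfl
    | insert _ _ h ih => rw [Finset.sum_insert h, Finset.sum_insert h, ← ih]; rfl]
  rfl

lemma vecE_smul {u v : ℕ} (c : ℂ) (M : Fin u → Fin v → ℂ) :
    vecE (fun a b => c * M a b) = c • vecE M := rfl

lemma vecE_add {u v : ℕ} (M N : Fin u → Fin v → ℂ) :
    vecE (fun a b => M a b + N a b) = vecE M + vecE N := rfl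

lemma center_le {m : ℕ} (q : Fin m → ℝ) (hq : ∑ j, q j = 1) (c : Fin m → ℂ) :
    ∑ j, q j * ‖c j - ∑ k, (q k : ℂ) * c k‖ ^ 2 ≤ ∑ j, q j * ‖c j‖ ^ 2 := by
  set μc : ℂ := ∑ k, (q k : ℂ) * c k with hμ
  have hconj : ∑ j, (q j : ℂ) * starRingEnd ℂ (c j) = starRingEnd ℂ μc := by
    rw [hμ, map_sum]
    exact Finset.sum_congr rfl fun j _ => by rw [_root_.map_mul, Complex.conj_ofReal]
  have key : ∑ j, (q j : ℂ) * (starRingEnd ℂ (c j - μc) * (c j - μc))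
      = ∑ j, (q j : ℂ) * (starRingEnd ℂ (c j) * c j) - starRingEnd ℂ μc * μc := by
    have expand : ∀ j, (q j : ℂ) * (starRingEnd ℂ (c j - μc) * (c j - μc))
        = (q j : ℂ) * (starRingEnd ℂ (c j) * c j)
          - ((q j : ℂ) * starRingEnd ℂ (c j)) * μc
          - starRingEnd ℂ μc * ((q j : ℂ) * c j)
          + (q j : ℂ) * (starRingEnd ℂ μc * μc) := by
      intro j; rw [map_sub]; ring
    rw [Finset.sum_congr rfl fun j _ => expand j]
    rw [Finset.sum_add_distrib, Finset.sum_sub_distrib, Finset.sum_sub_distrib,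
      ← Finset.sum_mul, hconj, ← Finset.mul_sum, ← hμ, ← Finset.sum_mul]
    have : (∑ j, (q j : ℂ)) = 1 := by exact_mod_cast hq
    rw [this, one_mul]
    ring
  have cast_eq : ((∑ j, q j * ‖c j - μc‖ ^ 2 : ℝ) : ℂ)
      = ((∑ j, q j * ‖c j‖ ^ 2 - ‖μc‖ ^ 2 : ℝ) : ℂ) := by
    push_cast
    simp only [← Complex.conj_mul']
    rw [key]
  have req : ∑ j, q j * ‖c j - μc‖ ^ 2 = ∑ j, q j * ‖c j‖ ^ 2 - ‖μc‖ ^ 2 :=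
    Complex.ofReal_inj.mp cast_eq
  rw [req]
  have : (0:ℝ) ≤ ‖μc‖ ^ 2 := by positivity
  linarith

lemma frobNorm_pos {u v : ℕ} (M : Matrix (Fin u) (Fin v) ℂ) (h : M ≠ 0) : 0 < frobNorm M := by
  rw [frobNorm, Real.sqrt_pos]
  have hex : ∃ i j, M i j ≠ 0 := by
    by_contra hc
    push_neg at hc
    exact h (by ext i j; simpa using hc i j)
  obtain ⟨i, j, hij⟩ := hex
  have hpos : 0 < ‖M i j‖ ^ 2 := pow_pos (norm_pos_iff.mpr hij) 2
  refine Finset.sum_pos' (fun i _ => Finset.sum_nonneg fun j _ => by positivity)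
    ⟨i, Finset.mem_univ i, Finset.sum_pos' (fun j _ => by positivity)
      ⟨j, Finset.mem_univ j, hpos⟩⟩

lemma variance_NA_bound {m n n' : ℕ} (X : Matrix (Fin m) (Fin n) ℂ) (Y : Matrix (Fin m) (Fin n') ℂ)
    (hX : X ≠ 0) (hY : Y ≠ 0) (ε φ : ℝ) (hε0 : 0 ≤ ε) (hφ : 1 ≤ φ)
    (p ptilde : Fin m → ℝ) (hp_nonneg : ∀ j, 0 ≤ p j) (hpt_nonneg : ∀ j, 0 ≤ ptilde j)
    (hp_over : ∀ j, (1 / φ) * (rowNorm X j ^ 2 / frobNorm X ^ 2) ≤ p j)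
    (hTV2 : ∑ j, |ptilde j - p j| ≤ 2 * ε)
    (Γ : Fin m → Prop) [DecidablePred Γ]
    (hΓ : ∀ j, Γ j ↔ frobNorm Y * rowNorm X j ≤ Real.sqrt (2 * φ * ε) * frobNorm X * rowNorm Y j) :
    ∑ j, ptilde j * (∑ a, ∑ b, ‖sampA X Y p Γ j a b‖ ^ 2)
      ≤ 2 * φ * frobNorm X ^ 2 * frobNorm Y ^ 2 := by
  have hφ0 : (0:ℝ) < φ := lt_of_lt_of_le one_pos hφ
  set FX := frobNorm X with hFXdef
  set FY := frobNorm Y with hFYdef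
  have hFX : 0 < FX := frobNorm_pos X hX
  have hFY : 0 < FY := frobNorm_pos Y hY
  set RX : Fin m → ℝ := fun j => ∑ a, ‖X j a‖ ^ 2 with hRXdef
  set RY : Fin m → ℝ := fun j => ∑ b, ‖Y j b‖ ^ 2 with hRYdef
  have hRX_nonneg : ∀ j, 0 ≤ RX j := fun j => Finset.sum_nonneg fun a _ => by positivity
  have hRY_nonneg : ∀ j, 0 ≤ RY j := fun j => Finset.sum_nonneg fun b _ => by positivity
  have hrowX : ∀ j, rowNorm X j ^ 2 = RX j := fun j => Real.sq_sqrt (hRX_nonneg j)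
  have hrowY : ∀ j, rowNorm Y j ^ 2 = RY j := fun j => Real.sq_sqrt (hRY_nonneg j)
  have hrowX' : ∀ j, rowNorm X j = Real.sqrt (RX j) := fun j => rfl
  have hrowY' : ∀ j, rowNorm Y j = Real.sqrt (RY j) := fun j => rfl
  have hFX2 : ∑ j, RX j = FX ^ 2 := by
    rw [hFXdef, frobNorm, Real.sq_sqrt (Finset.sum_nonneg fun i _ =>
      Finset.sum_nonneg fun j _ => by positivity)]
  have hFY2 : ∑ j, RY j = FY ^ 2 := by
    rw [hFYdef, frobNorm, Real.sq_sqrt (Finset.sum_nonneg fun i _ =>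
      Finset.sum_nonneg fun j _ => by positivity)]
  have f1 : ∀ j, RX j ≤ φ * p j * FX ^ 2 := by
    intro j
    have h := hp_over j
    rw [hrowX] at h
    have heq : RX j = (φ * FX ^ 2) * ((1/φ) * (RX j / FX ^ 2)) := by
      field_simp
    rw [heq]
    calc (φ * FX ^ 2) * ((1/φ) * (RX j / FX ^ 2)) ≤ (φ * FX ^ 2) * p j :=
          mul_le_mul_of_nonneg_left h (by positivity)
      _ = φ * p j * FX ^ 2 := by ring
  have f2 : ∀ j, ¬ Γ j → 2 * ε * RY j ≤ p j * FY ^ 2 := by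
    intro j hj
    have h2 : Real.sqrt (2 * φ * ε) * FX * rowNorm Y j < FY * rowNorm X j :=
      lt_of_not_ge (fun hle => hj ((hΓ j).mpr hle))
    have hsq : (Real.sqrt (2 * φ * ε) * FX * rowNorm Y j) ^ 2 < (FY * rowNorm X j) ^ 2 := by
      have hnn : 0 ≤ Real.sqrt (2 * φ * ε) * FX * rowNorm Y j := by
        have : 0 ≤ rowNorm Y j := Real.sqrt_nonneg _
        positivity
      exact pow_lt_pow_left₀ h2 hnn (by norm_num)
    rw [mul_pow, mul_pow, mul_pow, Real.sq_sqrt (by positivity), hrowX, hrowY] at hsq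
    have hcomb : 2 * φ * ε * (FX ^ 2 * RY j) < FY ^ 2 * (φ * p j * FX ^ 2) := by
      have := f1 j
      nlinarith [hRY_nonneg j, sq_nonneg FY]
    have hrw : φ * FX ^ 2 * (2 * ε * RY j) < φ * FX ^ 2 * (p j * FY ^ 2) := by nlinarith
    have := lt_of_mul_lt_mul_left hrw (by positivity : (0:ℝ) ≤ φ * FX ^ 2)
    linarith
  have f3 : ∀ j, ¬ 0 < p j → RX j = 0 := by
    intro j hj
    have hp0 : p j = 0 := le_antisymm (not_lt.mp hj) (hp_nonneg j)
    have := f1 j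
    rw [hp0] at this
    have : RX j ≤ 0 := by linarith
    linarith [hRX_nonneg j]
  set NA : Fin m → ℝ := fun j => ∑ a, ∑ b, ‖sampA X Y p Γ j a b‖ ^ 2 with hNAdef
  have hNA_nonneg : ∀ j, 0 ≤ NA j := fun j =>
    Finset.sum_nonneg fun a _ => Finset.sum_nonneg fun b _ => by positivity
  have NA_eq : ∀ j, NA j = if 0 < p j ∧ ¬ Γ j then (p j)⁻¹ ^ 2 * (RX j * RY j) else 0 := by
    intro j
    by_cases hχ : 0 < p j ∧ ¬ Γ j
    · simp only [hNAdef, sampA, if_pos hχ]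
      have hnorm : ∀ (a : Fin n) (b : Fin n'),
          ‖(((p j)⁻¹ : ℝ) : ℂ) * (starRingEnd ℂ (X j a) * Y j b)‖ ^ 2
            = (p j)⁻¹ ^ 2 * (‖X j a‖ ^ 2 * ‖Y j b‖ ^ 2) := by
        intro a b
        rw [norm_mul, norm_mul, Complex.norm_real, RCLike.norm_conj, Real.norm_eq_abs,
          abs_of_nonneg (inv_nonneg.mpr (le_of_lt hχ.1))]
        ring
      rw [Finset.sum_congr rfl fun a _ => Finset.sum_congr rfl fun b _ => hnorm a b]
      calc ∑ a, ∑ b, (p j)⁻¹ ^ 2 * (‖X j a‖ ^ 2 * ‖Y j b‖ ^ 2)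
          = ∑ a, (p j)⁻¹ ^ 2 * (‖X j a‖ ^ 2 * ∑ b, ‖Y j b‖ ^ 2) := by
            refine Finset.sum_congr rfl fun a _ => ?_
            rw [← Finset.mul_sum, ← Finset.mul_sum]
        _ = (p j)⁻¹ ^ 2 * ((∑ a, ‖X j a‖ ^ 2) * ∑ b, ‖Y j b‖ ^ 2) := by
            rw [← Finset.mul_sum, ← Finset.sum_mul]
        _ = (p j)⁻¹ ^ 2 * (RX j * RY j) := rfl
    · simp only [hNAdef, sampA, if_neg hχ]
      simp
  have NA_bound1 : ∀ j, p j * NA j ≤ φ * FX ^ 2 * RY j := by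
    intro j
    rw [NA_eq j]
    by_cases hχ : 0 < p j ∧ ¬ Γ j
    · rw [if_pos hχ]
      have hp := hχ.1
      have heq : p j * ((p j)⁻¹ ^ 2 * (RX j * RY j)) = (RX j / p j) * RY j := by
        field_simp
      rw [heq]
      have hdiv : RX j / p j ≤ φ * FX ^ 2 := by
        rw [div_le_iff₀ hp]
        calc RX j ≤ φ * p j * FX ^ 2 := f1 j
          _ = φ * FX ^ 2 * p j := by ring
      exact mul_le_mul_of_nonneg_right hdiv (hRY_nonneg j)
    · rw [if_neg hχ]
      simp only [mul_zero]
      exact mul_nonneg (mul_nonneg hφ0.le (sq_nonneg FX)) (hRY_nonneg j)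
  have NA_bound2 : ∀ j, 2 * ε * NA j ≤ φ * FX ^ 2 * FY ^ 2 := by
    intro j
    rw [NA_eq j]
    by_cases hχ : 0 < p j ∧ ¬ Γ j
    · rw [if_pos hχ]
      have hp := hχ.1
      have h2e : 2 * ε * RY j ≤ p j * FY ^ 2 := f2 j hχ.2
      have hx : RX j ≤ φ * p j * FX ^ 2 := f1 j
      have key : 2 * ε * ((p j)⁻¹ ^ 2 * (RX j * RY j)) = (RX j / p j) * (2 * ε * RY j / p j) := by
        field_simp
      rw [key]
      have hdx : RX j / p j ≤ φ * FX ^ 2 := by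
        rw [div_le_iff₀ hp]
        exact hx.trans (le_of_eq (by ring))
      have hdy : 2 * ε * RY j / p j ≤ FY ^ 2 := by
        rw [div_le_iff₀ hp]
        exact h2e.trans (le_of_eq (by ring))
      have h2 : 0 ≤ 2 * ε * RY j / p j :=
        div_nonneg (mul_nonneg (by linarith) (hRY_nonneg j)) (le_of_lt hp)
      calc (RX j / p j) * (2 * ε * RY j / p j) ≤ (φ * FX ^ 2) * FY ^ 2 :=
            mul_le_mul hdx hdy h2 (mul_nonneg hφ0.le (sq_nonneg FX))
        _ = φ * FX ^ 2 * FY ^ 2 := by ring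
    · rw [if_neg hχ]
      simp only [mul_zero]
      exact mul_nonneg (mul_nonneg hφ0.le (sq_nonneg FX)) (sq_nonneg FY)
  have term2 : ∑ j, |ptilde j - p j| * NA j ≤ φ * FX ^ 2 * FY ^ 2 := by
    rcases lt_or_eq_of_le hε0 with hεpos | hεz
    · have per : ∀ j, |ptilde j - p j| * NA j
          ≤ |ptilde j - p j| * (φ * FX ^ 2 * FY ^ 2 / (2 * ε)) := by
        intro j
        refine mul_le_mul_of_nonneg_left ?_ (abs_nonneg _)
        rw [le_div_iff₀ (by positivity)]
        calc NA j * (2 * ε) = 2 * ε * NA j := by ring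
          _ ≤ φ * FX ^ 2 * FY ^ 2 := NA_bound2 j
      calc ∑ j, |ptilde j - p j| * NA j
          ≤ ∑ j, |ptilde j - p j| * (φ * FX ^ 2 * FY ^ 2 / (2 * ε)) :=
            Finset.sum_le_sum fun j _ => per j
        _ = (∑ j, |ptilde j - p j|) * (φ * FX ^ 2 * FY ^ 2 / (2 * ε)) := by
            rw [Finset.sum_mul]
        _ ≤ (2 * ε) * (φ * FX ^ 2 * FY ^ 2 / (2 * ε)) := by
            refine mul_le_mul_of_nonneg_right hTV2 ?_
            positivity
        _ = φ * FX ^ 2 * FY ^ 2 := by field_simp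
    · have hzero : ∀ j, |ptilde j - p j| = 0 := by
        intro j
        have hsum : ∑ j, |ptilde j - p j| ≤ 0 := by rw [← hεz] at hTV2; linarith
        have hnn : ∀ j ∈ Finset.univ, (0:ℝ) ≤ |ptilde j - p j| := fun j _ => abs_nonneg _
        have := (Finset.sum_eq_zero_iff_of_nonneg hnn).mp
          (le_antisymm hsum (Finset.sum_nonneg hnn))
        exact this j (Finset.mem_univ j)
      calc ∑ j, |ptilde j - p j| * NA j = 0 := by
            refine Finset.sum_eq_zero fun j _ => ?_
            rw [hzero j, zero_mul]
        _ ≤ φ * FX ^ 2 * FY ^ 2 := by positivity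
  have varNA : ∑ j, ptilde j * NA j ≤ 2 * φ * FX ^ 2 * FY ^ 2 := by
    have per : ∀ j, ptilde j * NA j ≤ p j * NA j + |ptilde j - p j| * NA j := by
      intro j
      have h1 : ptilde j ≤ p j + |ptilde j - p j| := by
        have := le_abs_self (ptilde j - p j)
        linarith
      calc ptilde j * NA j ≤ (p j + |ptilde j - p j|) * NA j :=
            mul_le_mul_of_nonneg_right h1 (hNA_nonneg j)
        _ = p j * NA j + |ptilde j - p j| * NA j := by ring
    have term1 : ∑ j, p j * NA j ≤ φ * FX ^ 2 * FY ^ 2 := by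
      calc ∑ j, p j * NA j ≤ ∑ j, φ * FX ^ 2 * RY j :=
            Finset.sum_le_sum fun j _ => NA_bound1 j
        _ = φ * FX ^ 2 * ∑ j, RY j := by rw [← Finset.mul_sum]
        _ = φ * FX ^ 2 * FY ^ 2 := by rw [hFY2]
    calc ∑ j, ptilde j * NA j ≤ ∑ j, (p j * NA j + |ptilde j - p j| * NA j) :=
          Finset.sum_le_sum fun j _ => per j
      _ = (∑ j, p j * NA j) + ∑ j, |ptilde j - p j| * NA j := Finset.sum_add_distrib
      _ ≤ 2 * φ * FX ^ 2 * FY ^ 2 := by linarith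

  exact varNA

lemma bias_vec_bound {m n n' : ℕ} (X : Matrix (Fin m) (Fin n) ℂ) (Y : Matrix (Fin m) (Fin n') ℂ)
    (hX : X ≠ 0) (hY : Y ≠ 0) (ε φ : ℝ) (hε0 : 0 ≤ ε) (hφ : 1 ≤ φ)
    (p ptilde : Fin m → ℝ) (hp_nonneg : ∀ j, 0 ≤ p j) (hpt_nonneg : ∀ j, 0 ≤ ptilde j)
    (hp_over : ∀ j, (1 / φ) * (rowNorm X j ^ 2 / frobNorm X ^ 2) ≤ p j)
    (hTV2 : ∑ j, |ptilde j - p j| ≤ 2 * ε)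
    (Γ : Fin m → Prop) [DecidablePred Γ]
    (hΓ : ∀ j, Γ j ↔ frobNorm Y * rowNorm X j ≤ Real.sqrt (2 * φ * ε) * frobNorm X * rowNorm Y j) :
    ‖vecE (fun a b => (∑ k, ((ptilde k : ℝ) : ℂ) * sampA X Y p Γ k a b) - (Xᴴ * Y) a b)‖
      ≤ 2 * Real.sqrt (2 * ε) * Real.sqrt φ * frobNorm X * frobNorm Y := by
  have hφ0 : (0:ℝ) < φ := lt_of_lt_of_le one_pos hφ
  set FX := frobNorm X with hFXdef
  set FY := frobNorm Y with hFYdef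
  have hFX : 0 < FX := frobNorm_pos X hX
  have hFY : 0 < FY := frobNorm_pos Y hY
  set RX : Fin m → ℝ := fun j => ∑ a, ‖X j a‖ ^ 2 with hRXdef
  set RY : Fin m → ℝ := fun j => ∑ b, ‖Y j b‖ ^ 2 with hRYdef
  have hRX_nonneg : ∀ j, 0 ≤ RX j := fun j => Finset.sum_nonneg fun a _ => by positivity
  have hRY_nonneg : ∀ j, 0 ≤ RY j := fun j => Finset.sum_nonneg fun b _ => by positivity
  have hrowX : ∀ j, rowNorm X j ^ 2 = RX j := fun j => Real.sq_sqrt (hRX_nonneg j)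
  have hrowY : ∀ j, rowNorm Y j ^ 2 = RY j := fun j => Real.sq_sqrt (hRY_nonneg j)
  have hrowX' : ∀ j, rowNorm X j = Real.sqrt (RX j) := fun j => rfl
  have hrowY' : ∀ j, rowNorm Y j = Real.sqrt (RY j) := fun j => rfl
  have hFX2 : ∑ j, RX j = FX ^ 2 := by
    rw [hFXdef, frobNorm, Real.sq_sqrt (Finset.sum_nonneg fun i _ =>
      Finset.sum_nonneg fun j _ => by positivity)]
  have hFY2 : ∑ j, RY j = FY ^ 2 := by
    rw [hFYdef, frobNorm, Real.sq_sqrt (Finset.sum_nonneg fun i _ =>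
      Finset.sum_nonneg fun j _ => by positivity)]
  have f1 : ∀ j, RX j ≤ φ * p j * FX ^ 2 := by
    intro j
    have h := hp_over j
    rw [hrowX] at h
    have heq : RX j = (φ * FX ^ 2) * ((1/φ) * (RX j / FX ^ 2)) := by
      field_simp
    rw [heq]
    calc (φ * FX ^ 2) * ((1/φ) * (RX j / FX ^ 2)) ≤ (φ * FX ^ 2) * p j :=
          mul_le_mul_of_nonneg_left h (by positivity)
      _ = φ * p j * FX ^ 2 := by ring
  have f2 : ∀ j, ¬ Γ j → 2 * ε * RY j ≤ p j * FY ^ 2 := by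
    intro j hj
    have h2 : Real.sqrt (2 * φ * ε) * FX * rowNorm Y j < FY * rowNorm X j :=
      lt_of_not_ge (fun hle => hj ((hΓ j).mpr hle))
    have hsq : (Real.sqrt (2 * φ * ε) * FX * rowNorm Y j) ^ 2 < (FY * rowNorm X j) ^ 2 := by
      have hnn : 0 ≤ Real.sqrt (2 * φ * ε) * FX * rowNorm Y j := by
        have : 0 ≤ rowNorm Y j := Real.sqrt_nonneg _
        positivity
      exact pow_lt_pow_left₀ h2 hnn (by norm_num)
    rw [mul_pow, mul_pow, mul_pow, Real.sq_sqrt (by positivity), hrowX, hrowY] at hsq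
    have hcomb : 2 * φ * ε * (FX ^ 2 * RY j) < FY ^ 2 * (φ * p j * FX ^ 2) := by
      have := f1 j
      nlinarith [hRY_nonneg j, sq_nonneg FY]
    have hrw : φ * FX ^ 2 * (2 * ε * RY j) < φ * FX ^ 2 * (p j * FY ^ 2) := by nlinarith
    have := lt_of_mul_lt_mul_left hrw (by positivity : (0:ℝ) ≤ φ * FX ^ 2)
    linarith
  have f3 : ∀ j, ¬ 0 < p j → RX j = 0 := by
    intro j hj
    have hp0 : p j = 0 := le_antisymm (not_lt.mp hj) (hp_nonneg j)
    have := f1 j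
    rw [hp0] at this
    have : RX j ≤ 0 := by linarith
    linarith [hRX_nonneg j]
  set A : Fin m → Fin n → Fin n' → ℂ := fun j => sampA X Y p Γ j with hAdef
  set μf : Fin n → Fin n' → ℂ := fun a b => ∑ k, ((ptilde k : ℝ) : ℂ) * A k a b with hμdef
  set ηR : Fin m → ℝ := fun j => (if 0 < p j ∧ ¬ Γ j then ptilde j / p j else 0) - 1 with hηdef
  have bias_entry : ∀ a b, μf a b - (Xᴴ * Y) a b
      = ∑ j, ((ηR j : ℝ) : ℂ) * (starRingEnd ℂ (X j a) * Y j b) := by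
    intro a b
    have hXY : (Xᴴ * Y) a b = ∑ j, starRingEnd ℂ (X j a) * Y j b := by
      rw [Matrix.mul_apply]
      exact Finset.sum_congr rfl fun j _ => by rw [conjTranspose_apply]; rfl
    rw [hXY]
    simp only [hμdef]
    rw [← Finset.sum_sub_distrib]
    refine Finset.sum_congr rfl fun j _ => ?_
    by_cases hχ : 0 < p j ∧ ¬ Γ j
    · simp only [hAdef, sampA, if_pos hχ, hηdef]
      have hpne : (p j : ℂ) ≠ 0 := by exact_mod_cast ne_of_gt hχ.1
      push_cast
      field_simp
    · simp only [hAdef, sampA, if_neg hχ, hηdef]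
      push_cast
      ring
  have hR_norm : ∀ j, ‖vecE (fun a b => starRingEnd ℂ (X j a) * Y j b)‖
      = Real.sqrt (RX j) * Real.sqrt (RY j) := by
    intro j
    rw [vecE_norm]
    have hsum : (∑ a, ∑ b, ‖starRingEnd ℂ (X j a) * Y j b‖ ^ 2) = RX j * RY j := by
      have h1 : ∀ (a : Fin n) (b : Fin n'), ‖starRingEnd ℂ (X j a) * Y j b‖ ^ 2
          = ‖X j a‖ ^ 2 * ‖Y j b‖ ^ 2 := by
        intro a b
        rw [norm_mul, RCLike.norm_conj, mul_pow]
      rw [Finset.sum_congr rfl fun a _ => Finset.sum_congr rfl fun b _ => h1 a b]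
      calc ∑ a, ∑ b, ‖X j a‖ ^ 2 * ‖Y j b‖ ^ 2
          = ∑ a, ‖X j a‖ ^ 2 * ∑ b, ‖Y j b‖ ^ 2 := by
            refine Finset.sum_congr rfl fun a _ => ?_
            rw [← Finset.mul_sum]
        _ = RX j * RY j := by rw [← Finset.sum_mul]
    rw [hsum, Real.sqrt_mul (hRX_nonneg j)]
  have biasF : ‖vecE (fun a b => μf a b - (Xᴴ * Y) a b)‖
      ≤ 2 * Real.sqrt (2 * ε) * Real.sqrt φ * FX * FY := by
    have h0 : (fun (a : Fin n) (b : Fin n') => μf a b - (Xᴴ * Y) a b)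
        = fun a b => ∑ j, ((ηR j : ℝ) : ℂ) * (starRingEnd ℂ (X j a) * Y j b) :=
      funext fun a => funext fun b => bias_entry a b
    rw [h0, vecE_sum (f := fun j a b => ((ηR j : ℝ) : ℂ) * (starRingEnd ℂ (X j a) * Y j b))]
    refine le_trans (norm_sum_le _ _) ?_
    have hterm : ∀ j, ‖vecE (fun a b => ((ηR j : ℝ) : ℂ) * (starRingEnd ℂ (X j a) * Y j b))‖
        = |ηR j| * (Real.sqrt (RX j) * Real.sqrt (RY j)) := by
      intro j
      rw [vecE_smul, norm_smul, hR_norm j, Complex.norm_real, Real.norm_eq_abs]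
    rw [Finset.sum_congr rfl fun j _ => hterm j]
    -- split into truncated and untruncated parts
    set T : Fin m → ℝ := fun j => |ηR j| * (Real.sqrt (RX j) * Real.sqrt (RY j)) with hTdef
    have hT_nonneg : ∀ j, 0 ≤ T j := fun j =>
      mul_nonneg (abs_nonneg _) (mul_nonneg (Real.sqrt_nonneg _) (Real.sqrt_nonneg _))
    have hsplit : ∀ j, T j = (if 0 < p j ∧ ¬ Γ j then T j else 0)
        + (if 0 < p j ∧ ¬ Γ j then 0 else T j) := by
      intro j; by_cases hχ : 0 < p j ∧ ¬ Γ j <;> simp [hχ]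
    rw [Finset.sum_congr rfl fun j _ => hsplit j, Finset.sum_add_distrib]
    have hKnn : 0 ≤ Real.sqrt (2 * ε) * Real.sqrt φ * FX * FY :=
      mul_nonneg (mul_nonneg (mul_nonneg (Real.sqrt_nonneg _) (Real.sqrt_nonneg _)) hFX.le)
        hFY.le
    have sumU : ∑ j, (if 0 < p j ∧ ¬ Γ j then T j else 0)
        ≤ Real.sqrt (2 * ε) * Real.sqrt φ * FX * FY := by
      rcases lt_or_eq_of_le hε0 with hεpos | hεz
      · have hs2e : 0 < Real.sqrt (2 * ε) := Real.sqrt_pos.mpr (by linarith)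
        have per : ∀ j, (if 0 < p j ∧ ¬ Γ j then T j else 0)
            ≤ |ptilde j - p j| * (Real.sqrt φ * FX * FY / Real.sqrt (2 * ε)) := by
          intro j
          by_cases hχ : 0 < p j ∧ ¬ Γ j
          · rw [if_pos hχ]
            have hp := hχ.1
            have hη : |ηR j| = |ptilde j - p j| / p j := by
              simp only [hηdef, if_pos hχ]
              rw [show ptilde j / p j - 1 = (ptilde j - p j) / p j from by
                field_simp]
              rw [abs_div, abs_of_pos hp]
            have ha : Real.sqrt (RX j) ≤ Real.sqrt φ * Real.sqrt (p j) * FX := by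
              have := Real.sqrt_le_sqrt (f1 j)
              rwa [Real.sqrt_mul (mul_nonneg hφ0.le (hp_nonneg j)), Real.sqrt_sq hFX.le,
                Real.sqrt_mul hφ0.le] at this
            have hb : Real.sqrt (2 * ε) * Real.sqrt (RY j) ≤ Real.sqrt (p j) * FY := by
              have h := Real.sqrt_le_sqrt (f2 j hχ.2)
              rwa [Real.sqrt_mul (by linarith : (0:ℝ) ≤ 2 * ε),
                Real.sqrt_mul (hp_nonneg j), Real.sqrt_sq hFY.le] at h
            have hab : Real.sqrt (RX j) * Real.sqrt (RY j) * Real.sqrt (2 * ε)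
                ≤ Real.sqrt φ * FX * FY * p j := by
              calc Real.sqrt (RX j) * Real.sqrt (RY j) * Real.sqrt (2 * ε)
                  = Real.sqrt (RX j) * (Real.sqrt (2 * ε) * Real.sqrt (RY j)) := by ring
                _ ≤ (Real.sqrt φ * Real.sqrt (p j) * FX) * (Real.sqrt (p j) * FY) :=
                    mul_le_mul ha hb
                      (mul_nonneg hs2e.le (Real.sqrt_nonneg _))
                      (mul_nonneg (mul_nonneg (Real.sqrt_nonneg _) (Real.sqrt_nonneg _)) hFX.le)
                _ = Real.sqrt φ * FX * FY * (Real.sqrt (p j) * Real.sqrt (p j)) := by ring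
                _ = Real.sqrt φ * FX * FY * p j := by
                    rw [Real.mul_self_sqrt (hp_nonneg j)]
            have hdivle : Real.sqrt (RX j) * Real.sqrt (RY j) / p j
                ≤ Real.sqrt φ * FX * FY / Real.sqrt (2 * ε) := by
              rw [div_le_div_iff₀ hp hs2e]
              exact hab
            calc T j = |ptilde j - p j| * (Real.sqrt (RX j) * Real.sqrt (RY j) / p j) := by
                  rw [hTdef]
                  simp only
                  rw [hη]
                  ring
              _ ≤ |ptilde j - p j| * (Real.sqrt φ * FX * FY / Real.sqrt (2 * ε)) :=
                  mul_le_mul_of_nonneg_left hdivle (abs_nonneg _)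
          · rw [if_neg hχ]
            exact mul_nonneg (abs_nonneg _) (div_nonneg
              (mul_nonneg (mul_nonneg (Real.sqrt_nonneg _) hFX.le) hFY.le) (Real.sqrt_nonneg _))
        calc ∑ j, (if 0 < p j ∧ ¬ Γ j then T j else 0)
            ≤ ∑ j, |ptilde j - p j| * (Real.sqrt φ * FX * FY / Real.sqrt (2 * ε)) :=
              Finset.sum_le_sum fun j _ => per j
          _ = (∑ j, |ptilde j - p j|) * (Real.sqrt φ * FX * FY / Real.sqrt (2 * ε)) :=
              (Finset.sum_mul _ _ _).symm
          _ ≤ (2 * ε) * (Real.sqrt φ * FX * FY / Real.sqrt (2 * ε)) := by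
              exact mul_le_mul_of_nonneg_right hTV2 (div_nonneg
                (mul_nonneg (mul_nonneg (Real.sqrt_nonneg _) hFX.le) hFY.le) (Real.sqrt_nonneg _))
          _ = Real.sqrt (2 * ε) * Real.sqrt φ * FX * FY := by
              rw [show (2 * ε) * (Real.sqrt φ * FX * FY / Real.sqrt (2 * ε))
                  = (2 * ε / Real.sqrt (2 * ε)) * (Real.sqrt φ * FX * FY) from by ring,
                Real.div_sqrt]
              ring
      · have hzero : ∀ j, |ptilde j - p j| = 0 := by
          intro j
          have hsum : ∑ j, |ptilde j - p j| ≤ 0 := by rw [← hεz] at hTV2; linarith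
          have hnn : ∀ j ∈ Finset.univ, (0:ℝ) ≤ |ptilde j - p j| := fun j _ => abs_nonneg _
          exact (Finset.sum_eq_zero_iff_of_nonneg hnn).mp
            (le_antisymm hsum (Finset.sum_nonneg hnn)) j (Finset.mem_univ j)
        have : ∀ j, (if 0 < p j ∧ ¬ Γ j then T j else 0) = 0 := by
          intro j
          by_cases hχ : 0 < p j ∧ ¬ Γ j
          · rw [if_pos hχ]
            have hpteq : ptilde j = p j := by
              have := hzero j
              rw [abs_eq_zero] at this
              linarith
            have : ηR j = 0 := by
              simp only [hηdef, if_pos hχ]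
              rw [hpteq, div_self (ne_of_gt hχ.1), sub_self]
            rw [hTdef]
            simp only
            rw [this, abs_zero, zero_mul]
          · rw [if_neg hχ]
        rw [Finset.sum_congr rfl fun j _ => this j]
        simpa using hKnn
    have sumV : ∑ j, (if 0 < p j ∧ ¬ Γ j then 0 else T j)
        ≤ Real.sqrt (2 * ε) * Real.sqrt φ * FX * FY := by
      have per : ∀ j, (if 0 < p j ∧ ¬ Γ j then 0 else T j)
          ≤ Real.sqrt (2 * φ * ε) * (FX / FY) * RY j := by
        intro j
        by_cases hχ : 0 < p j ∧ ¬ Γ j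
        · rw [if_pos hχ]
          exact mul_nonneg (mul_nonneg (Real.sqrt_nonneg _) (div_nonneg hFX.le hFY.le))
            (hRY_nonneg j)
        · rw [if_neg hχ]
          have hη1 : |ηR j| = 1 := by
            simp only [hηdef, if_neg hχ]
            norm_num
          by_cases hp : 0 < p j
          · have hΓj : Γ j := by
              by_contra hg
              exact hχ ⟨hp, hg⟩
            have hineq := (hΓ j).mp hΓj
            rw [hrowX', hrowY'] at hineq
            -- FY * √RX ≤ √(2φε) * FX * √RY
            have h2 : Real.sqrt (RX j) * Real.sqrt (RY j)
                ≤ Real.sqrt (2 * φ * ε) * FX * RY j / FY := by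
              rw [le_div_iff₀ hFY]
              calc Real.sqrt (RX j) * Real.sqrt (RY j) * FY
                  = (FY * Real.sqrt (RX j)) * Real.sqrt (RY j) := by ring
                _ ≤ (Real.sqrt (2 * φ * ε) * FX * Real.sqrt (RY j)) * Real.sqrt (RY j) :=
                    mul_le_mul_of_nonneg_right hineq (Real.sqrt_nonneg _)
                _ = Real.sqrt (2 * φ * ε) * FX * (Real.sqrt (RY j) * Real.sqrt (RY j)) := by
                    ring
                _ = Real.sqrt (2 * φ * ε) * FX * RY j := by
                    rw [Real.mul_self_sqrt (hRY_nonneg j)]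
            calc T j = Real.sqrt (RX j) * Real.sqrt (RY j) := by
                  rw [hTdef]; simp only; rw [hη1, one_mul]
              _ ≤ Real.sqrt (2 * φ * ε) * FX * RY j / FY := h2
              _ = Real.sqrt (2 * φ * ε) * (FX / FY) * RY j := by ring
          · have hRX0 : RX j = 0 := f3 j hp
            calc T j
                = 0 := by
                  rw [hTdef]
                  simp only
                  rw [hRX0, Real.sqrt_zero, zero_mul, mul_zero]
              _ ≤ Real.sqrt (2 * φ * ε) * (FX / FY) * RY j :=
                  mul_nonneg (mul_nonneg (Real.sqrt_nonneg _) (div_nonneg hFX.le hFY.le))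
                    (hRY_nonneg j)
      calc ∑ j, (if 0 < p j ∧ ¬ Γ j then 0 else T j)
          ≤ ∑ j, Real.sqrt (2 * φ * ε) * (FX / FY) * RY j :=
            Finset.sum_le_sum fun j _ => per j
        _ = Real.sqrt (2 * φ * ε) * (FX / FY) * FY ^ 2 := by
            rw [← Finset.mul_sum, hFY2]
        _ = Real.sqrt (2 * ε) * Real.sqrt φ * FX * FY := by
            rw [show 2 * φ * ε = (2 * ε) * φ from by ring,
              Real.sqrt_mul (by linarith : (0:ℝ) ≤ 2 * ε)]
            field_simp
    calc ∑ j, (if 0 < p j ∧ ¬ Γ j then T j else 0) + ∑ j, (if 0 < p j ∧ ¬ Γ j then 0 else T j)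
        ≤ Real.sqrt (2 * ε) * Real.sqrt φ * FX * FY
          + Real.sqrt (2 * ε) * Real.sqrt φ * FX * FY := add_le_add sumU sumV
      _ = 2 * Real.sqrt (2 * ε) * Real.sqrt φ * FX * FY := by ring
  exact biasF

theorem biased_matrix_mult_sketch_concentration
    (m n n' r : ℕ) (hr : 1 ≤ r)
    (X : Matrix (Fin m) (Fin n) ℂ) (Y : Matrix (Fin m) (Fin n') ℂ)
    (hX : X ≠ 0) (hY : Y ≠ 0)
    (ε : ℝ) (hε : ε ∈ Set.Icc (0:ℝ) 1) (φ : ℝ) (hφ : 1 ≤ φ) (δ : ℝ) (hδ : 0 < δ)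
    (p ptilde : Fin m → ℝ)
    (hp_nonneg : ∀ j, 0 ≤ p j) (hp_sum : ∑ j, p j = 1)
    (hpt_nonneg : ∀ j, 0 ≤ ptilde j) (hpt_sum : ∑ j, ptilde j = 1)
    (hp_over : ∀ j, (1 / φ) * (rowNorm X j ^ 2 / frobNorm X ^ 2) ≤ p j)
    (hTV : (1/2) * ∑ j, |ptilde j - p j| ≤ ε)
    (Γ : Fin m → Prop) [DecidablePred Γ]
    (hΓ : ∀ j, Γ j ↔ frobNorm Y * rowNorm X j ≤ Real.sqrt (2 * φ * ε) * frobNorm X * rowNorm Y j) :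
    1 - δ ≤ ∑ s : Fin r → Fin m,
      if frobNorm (Xᴴ * (truncSketch r p Γ s)ᴴ * (truncSketch r p Γ s * Y) - Xᴴ * Y)
          ≤ (2 * Real.sqrt (2 * ε) + Real.sqrt (2 / (r * δ))) * Real.sqrt φ
              * frobNorm X * frobNorm Y
      then ∏ i, ptilde (s i) else 0 := by
  classical
  obtain ⟨hε0, hε1⟩ := hε
  have hφ0 : (0:ℝ) < φ := lt_of_lt_of_le one_pos hφ
  have hr0 : (0:ℝ) < (r:ℝ) := by exact_mod_cast hr
  set FX := frobNorm X with hFXdef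
  set FY := frobNorm Y with hFYdef
  have hFX : 0 < FX := frobNorm_pos X hX
  have hFY : 0 < FY := frobNorm_pos Y hY
  set RX : Fin m → ℝ := fun j => ∑ a, ‖X j a‖ ^ 2 with hRXdef
  set RY : Fin m → ℝ := fun j => ∑ b, ‖Y j b‖ ^ 2 with hRYdef
  have hRX_nonneg : ∀ j, 0 ≤ RX j := fun j => Finset.sum_nonneg fun a _ => by positivity
  have hRY_nonneg : ∀ j, 0 ≤ RY j := fun j => Finset.sum_nonneg fun b _ => by positivity
  have hrowX : ∀ j, rowNorm X j ^ 2 = RX j := fun j => Real.sq_sqrt (hRX_nonneg j)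
  have hrowY : ∀ j, rowNorm Y j ^ 2 = RY j := fun j => Real.sq_sqrt (hRY_nonneg j)
  have hrowX' : ∀ j, rowNorm X j = Real.sqrt (RX j) := fun j => rfl
  have hrowY' : ∀ j, rowNorm Y j = Real.sqrt (RY j) := fun j => rfl
  have hFX2 : ∑ j, RX j = FX ^ 2 := by
    rw [hFXdef, frobNorm, Real.sq_sqrt (Finset.sum_nonneg fun i _ =>
      Finset.sum_nonneg fun j _ => by positivity)]
  have hFY2 : ∑ j, RY j = FY ^ 2 := by
    rw [hFYdef, frobNorm, Real.sq_sqrt (Finset.sum_nonneg fun i _ =>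
      Finset.sum_nonneg fun j _ => by positivity)]
  -- basic row bounds
  have f1 : ∀ j, RX j ≤ φ * p j * FX ^ 2 := by
    intro j
    have h := hp_over j
    rw [hrowX] at h
    have heq : RX j = (φ * FX ^ 2) * ((1/φ) * (RX j / FX ^ 2)) := by
      field_simp
    rw [heq]
    calc (φ * FX ^ 2) * ((1/φ) * (RX j / FX ^ 2)) ≤ (φ * FX ^ 2) * p j :=
          mul_le_mul_of_nonneg_left h (by positivity)
      _ = φ * p j * FX ^ 2 := by ring
  have f2 : ∀ j, ¬ Γ j → 2 * ε * RY j ≤ p j * FY ^ 2 := by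
    intro j hj
    have h2 : Real.sqrt (2 * φ * ε) * FX * rowNorm Y j < FY * rowNorm X j :=
      lt_of_not_ge (fun hle => hj ((hΓ j).mpr hle))
    have hsq : (Real.sqrt (2 * φ * ε) * FX * rowNorm Y j) ^ 2 < (FY * rowNorm X j) ^ 2 := by
      have hnn : 0 ≤ Real.sqrt (2 * φ * ε) * FX * rowNorm Y j := by
        have : 0 ≤ rowNorm Y j := Real.sqrt_nonneg _
        positivity
      exact pow_lt_pow_left₀ h2 hnn (by norm_num)
    rw [mul_pow, mul_pow, mul_pow, Real.sq_sqrt (by positivity), hrowX, hrowY] at hsq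
    have hcomb : 2 * φ * ε * (FX ^ 2 * RY j) < FY ^ 2 * (φ * p j * FX ^ 2) := by
      have := f1 j
      nlinarith [hRY_nonneg j, sq_nonneg FY]
    have hrw : φ * FX ^ 2 * (2 * ε * RY j) < φ * FX ^ 2 * (p j * FY ^ 2) := by nlinarith
    have := lt_of_mul_lt_mul_left hrw (by positivity : (0:ℝ) ≤ φ * FX ^ 2)
    linarith
  have f3 : ∀ j, ¬ 0 < p j → RX j = 0 := by
    intro j hj
    have hp0 : p j = 0 := le_antisymm (not_lt.mp hj) (hp_nonneg j)
    have := f1 j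
    rw [hp0] at this
    have : RX j ≤ 0 := by linarith
    linarith [hRX_nonneg j]
  -- the sample matrices and their centered versions
  set A : Fin m → Fin n → Fin n' → ℂ := fun j => sampA X Y p Γ j with hAdef
  set μf : Fin n → Fin n' → ℂ := fun a b => ∑ k, ((ptilde k : ℝ) : ℂ) * A k a b with hμdef
  set Bf : Fin m → Fin n → Fin n' → ℂ := fun j a b => A j a b - μf a b with hBdef
  set qC : Fin m → ℂ := fun j => ((ptilde j : ℝ) : ℂ) with hqCdef
  have hqC1 : ∑ j, qC j = 1 := by
    simp only [hqCdef]
    exact_mod_cast hpt_sum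
  have hB0 : ∀ a b, ∑ j, qC j * Bf j a b = 0 := by
    intro a b
    simp only [hBdef, mul_sub]
    rw [Finset.sum_sub_distrib, ← Finset.sum_mul, hqC1, one_mul, sub_eq_zero]
  have hB0' : ∀ a b, ∑ j, qC j * starRingEnd ℂ (Bf j a b) = 0 := by
    intro a b
    have h1 : ∀ j, qC j * starRingEnd ℂ (Bf j a b) = starRingEnd ℂ (qC j * Bf j a b) := by
      intro j
      rw [_root_.map_mul]
      simp only [hqCdef, Complex.conj_ofReal]
    rw [Finset.sum_congr rfl fun j _ => h1 j, ← map_sum, hB0]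
    simp
  have SM := second_moment (r := r) qC hqC1 Bf hB0 hB0'
  set G : (Fin r → Fin m) → ℝ := fun s => ∑ a, ∑ b, ‖∑ i, Bf (s i) a b‖ ^ 2 with hGdef
  set NB : Fin m → ℝ := fun j => ∑ a, ∑ b, ‖Bf j a b‖ ^ 2 with hNBdef
  have hG_nonneg : ∀ s, 0 ≤ G s := fun s =>
    Finset.sum_nonneg fun a _ => Finset.sum_nonneg fun b _ => by positivity
  have hcm2 : ∀ z : ℂ, ((‖z‖ : ℝ) : ℂ) ^ 2 = starRingEnd ℂ z * z := by
    intro z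
    rw [Complex.conj_mul']
  have EG : ∑ s : Fin r → Fin m, (∏ i, ptilde (s i)) * G s = (r : ℝ) * ∑ j, ptilde j * NB j := by
    apply Complex.ofReal_inj.mp
    simp only [hGdef, hNBdef]
    push_cast
    simp only [hcm2]
    exact SM
  -- variance bound
  set NA : Fin m → ℝ := fun j => ∑ a, ∑ b, ‖A j a b‖ ^ 2 with hNAdef
  have hNA_nonneg : ∀ j, 0 ≤ NA j := fun j =>
    Finset.sum_nonneg fun a _ => Finset.sum_nonneg fun b _ => by positivity
  have rearr : ∀ (F : Fin m → Fin n → Fin n' → ℝ),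
      ∑ j, ptilde j * (∑ a, ∑ b, F j a b) = ∑ a, ∑ b, ∑ j, ptilde j * F j a b := by
    intro F
    simp only [Finset.mul_sum]
    exact (sum_swap_3 (fun a b j => ptilde j * F j a b)).symm
  have var_le : ∑ j, ptilde j * NB j ≤ ∑ j, ptilde j * NA j := by
    simp only [hNBdef, hNAdef]
    rw [rearr (fun j a b => ‖Bf j a b‖ ^ 2), rearr (fun j a b => ‖A j a b‖ ^ 2)]
    refine Finset.sum_le_sum fun a _ => Finset.sum_le_sum fun b _ => ?_
    exact center_le ptilde hpt_sum (fun j => A j a b)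
  have hTV2 : ∑ j, |ptilde j - p j| ≤ 2 * ε := by linarith
  have varNA : ∑ j, ptilde j * NA j ≤ 2 * φ * FX ^ 2 * FY ^ 2 :=
    variance_NA_bound X Y hX hY ε φ hε0 hφ p ptilde hp_nonneg hpt_nonneg hp_over hTV2 Γ hΓ
  -- bias bound
  have biasF : ‖vecE (fun a b => μf a b - (Xᴴ * Y) a b)‖
      ≤ 2 * Real.sqrt (2 * ε) * Real.sqrt φ * FX * FY :=
    bias_vec_bound X Y hX hY ε φ hε0 hφ p ptilde hp_nonneg hpt_nonneg hp_over hTV2 Γ hΓ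
  -- relating the sketch error to G and the bias
  have hrneC : (r : ℂ) ≠ 0 := Nat.cast_ne_zero.mpr (by omega)
  have entry_decomp : ∀ (s : Fin r → Fin m) a b,
      (Xᴴ * (truncSketch r p Γ s)ᴴ * (truncSketch r p Γ s * Y) - Xᴴ * Y) a b
        = (r : ℂ)⁻¹ * (∑ i, Bf (s i) a b) + (μf a b - (Xᴴ * Y) a b) := by
    intro s a b
    rw [Matrix.sub_apply, sketch_apply]
    have hsB : ∑ i : Fin r, Bf (s i) a b
        = (∑ i : Fin r, A (s i) a b) - (r : ℂ) * μf a b := by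
      simp only [hBdef]
      rw [Finset.sum_sub_distrib]
      simp [Finset.sum_const, Finset.card_univ, nsmul_eq_mul]
    rw [hsB]
    field_simp
    ring
  have frob_le : ∀ s : Fin r → Fin m,
      frobNorm (Xᴴ * (truncSketch r p Γ s)ᴴ * (truncSketch r p Γ s * Y) - Xᴴ * Y)
        ≤ (r : ℝ)⁻¹ * Real.sqrt (G s) + 2 * Real.sqrt (2 * ε) * Real.sqrt φ * FX * FY := by
    intro s
    have h1 : frobNorm (Xᴴ * (truncSketch r p Γ s)ᴴ * (truncSketch r p Γ s * Y) - Xᴴ * Y)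
        = ‖vecE (fun a b =>
            (Xᴴ * (truncSketch r p Γ s)ᴴ * (truncSketch r p Γ s * Y) - Xᴴ * Y) a b)‖ := by
      rw [vecE_norm]
      rfl
    rw [h1]
    have h2 : (fun a b =>
        (Xᴴ * (truncSketch r p Γ s)ᴴ * (truncSketch r p Γ s * Y) - Xᴴ * Y) a b)
        = fun a b => ((r : ℂ)⁻¹ * (∑ i, Bf (s i) a b)) + (μf a b - (Xᴴ * Y) a b) :=
      funext fun a => funext fun b => entry_decomp s a b
    rw [h2, vecE_add (fun a b => (r : ℂ)⁻¹ * (∑ i, Bf (s i) a b))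
      (fun a b => μf a b - (Xᴴ * Y) a b)]
    refine le_trans (norm_add_le _ _) (add_le_add ?_ biasF)
    rw [vecE_smul, norm_smul]
    have hn1 : ‖(r : ℂ)⁻¹‖ = (r : ℝ)⁻¹ := by
      rw [norm_inv, Complex.norm_natCast]
    have hn2 : ‖vecE (fun a b => ∑ i, Bf (s i) a b)‖ = Real.sqrt (G s) := by
      rw [vecE_norm, hGdef]
    rw [hn1, hn2]
  -- Markov / Chebyshev step
  set t : ℝ := Real.sqrt (2 / (r * δ)) * Real.sqrt φ * FX * FY with htdef
  have ht_pos : 0 < t := by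
    have h1 : 0 < Real.sqrt (2 / ((r:ℝ) * δ)) :=
      Real.sqrt_pos.mpr (div_pos two_pos (mul_pos hr0 hδ))
    have h2 : 0 < Real.sqrt φ := Real.sqrt_pos.mpr hφ0
    rw [htdef]
    exact mul_pos (mul_pos (mul_pos h1 h2) hFX) hFY
  have hrt2 : ((r : ℝ) * t) ^ 2 = (r : ℝ) * (2 * φ * FX ^ 2 * FY ^ 2) / δ := by
    rw [htdef]
    rw [mul_pow, mul_pow, mul_pow, mul_pow, Real.sq_sqrt (by positivity : (0:ℝ) ≤ 2 / (r * δ)),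
      Real.sq_sqrt hφ0.le]
    field_simp
  have w_nonneg : ∀ s : Fin r → Fin m, 0 ≤ ∏ i, ptilde (s i) :=
    fun s => Finset.prod_nonneg fun i _ => hpt_nonneg (s i)
  have sum_w : ∑ s : Fin r → Fin m, ∏ i, ptilde (s i) = 1 := by
    have h := exp_prod (R := ℝ) (r := r) ptilde (fun (_ : Fin r) (_ : Fin m) => (1:ℝ))
    simp only [mul_one, hpt_sum] at h
    rw [h]
    simp
  have hbad : ∀ s : Fin r → Fin m,
      ¬ (frobNorm (Xᴴ * (truncSketch r p Γ s)ᴴ * (truncSketch r p Γ s * Y) - Xᴴ * Y)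
          ≤ (2 * Real.sqrt (2 * ε) + Real.sqrt (2 / (r * δ))) * Real.sqrt φ * FX * FY)
      → ((r : ℝ) * t) ^ 2 ≤ G s := by
    intro s hs
    by_contra hG
    push_neg at hG
    apply hs
    have hsq : Real.sqrt (G s) < (r : ℝ) * t := by
      have h1 : Real.sqrt (G s) < Real.sqrt (((r : ℝ) * t) ^ 2) :=
        Real.sqrt_lt_sqrt (hG_nonneg s) hG
      rwa [Real.sqrt_sq (by positivity)] at h1
    calc frobNorm (Xᴴ * (truncSketch r p Γ s)ᴴ * (truncSketch r p Γ s * Y) - Xᴴ * Y)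
        ≤ (r : ℝ)⁻¹ * Real.sqrt (G s) + 2 * Real.sqrt (2 * ε) * Real.sqrt φ * FX * FY :=
          frob_le s
      _ ≤ (r : ℝ)⁻¹ * ((r : ℝ) * t) + 2 * Real.sqrt (2 * ε) * Real.sqrt φ * FX * FY := by
          have := mul_le_mul_of_nonneg_left hsq.le (inv_nonneg.mpr hr0.le)
          linarith
      _ = t + 2 * Real.sqrt (2 * ε) * Real.sqrt φ * FX * FY := by
          rw [inv_mul_cancel_left₀ (ne_of_gt hr0)]
      _ = (2 * Real.sqrt (2 * ε) + Real.sqrt (2 / (r * δ))) * Real.sqrt φ * FX * FY := by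
          rw [htdef]
          ring
  have markov : ∑ s : Fin r → Fin m,
      (if ¬ (frobNorm (Xᴴ * (truncSketch r p Γ s)ᴴ * (truncSketch r p Γ s * Y) - Xᴴ * Y)
          ≤ (2 * Real.sqrt (2 * ε) + Real.sqrt (2 / (r * δ))) * Real.sqrt φ * FX * FY)
        then ∏ i, ptilde (s i) else 0) ≤ δ := by
    have step : (∑ s : Fin r → Fin m,
        (if ¬ (frobNorm (Xᴴ * (truncSketch r p Γ s)ᴴ * (truncSketch r p Γ s * Y) - Xᴴ * Y)
            ≤ (2 * Real.sqrt (2 * ε) + Real.sqrt (2 / (r * δ))) * Real.sqrt φ * FX * FY)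
          then ∏ i, ptilde (s i) else 0)) * ((r : ℝ) * t) ^ 2
        ≤ ∑ s : Fin r → Fin m, (∏ i, ptilde (s i)) * G s := by
      rw [Finset.sum_mul]
      refine Finset.sum_le_sum fun s _ => ?_
      by_cases hs : frobNorm (Xᴴ * (truncSketch r p Γ s)ᴴ * (truncSketch r p Γ s * Y) - Xᴴ * Y)
          ≤ (2 * Real.sqrt (2 * ε) + Real.sqrt (2 / (r * δ))) * Real.sqrt φ * FX * FY
      · rw [if_neg (by exact not_not_intro hs), zero_mul]
        exact mul_nonneg (w_nonneg s) (hG_nonneg s)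
      · rw [if_pos hs]
        exact mul_le_mul_of_nonneg_left (hbad s hs) (w_nonneg s)
    have upper : ∑ s : Fin r → Fin m, (∏ i, ptilde (s i)) * G s ≤ δ * ((r : ℝ) * t) ^ 2 := by
      rw [EG, hrt2]
      have h1 : ∑ j, ptilde j * NB j ≤ 2 * φ * FX ^ 2 * FY ^ 2 := le_trans var_le varNA
      have h2 : (r : ℝ) * ∑ j, ptilde j * NB j ≤ (r : ℝ) * (2 * φ * FX ^ 2 * FY ^ 2) :=
        mul_le_mul_of_nonneg_left h1 hr0.le
      have h3 : δ * ((r : ℝ) * (2 * φ * FX ^ 2 * FY ^ 2) / δ)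
          = (r : ℝ) * (2 * φ * FX ^ 2 * FY ^ 2) := by
        field_simp
      linarith
    have hrt2pos : 0 < ((r : ℝ) * t) ^ 2 := pow_pos (mul_pos hr0 ht_pos) 2
    have := le_trans step upper
    calc (∑ s : Fin r → Fin m,
        (if ¬ (frobNorm (Xᴴ * (truncSketch r p Γ s)ᴴ * (truncSketch r p Γ s * Y) - Xᴴ * Y)
            ≤ (2 * Real.sqrt (2 * ε) + Real.sqrt (2 / (r * δ))) * Real.sqrt φ * FX * FY)
          then ∏ i, ptilde (s i) else 0))
        = (∑ s : Fin r → Fin m,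
          (if ¬ (frobNorm (Xᴴ * (truncSketch r p Γ s)ᴴ * (truncSketch r p Γ s * Y) - Xᴴ * Y)
              ≤ (2 * Real.sqrt (2 * ε) + Real.sqrt (2 / (r * δ))) * Real.sqrt φ * FX * FY)
            then ∏ i, ptilde (s i) else 0)) * ((r : ℝ) * t) ^ 2 / ((r : ℝ) * t) ^ 2 := by
          rw [mul_div_assoc, div_self (ne_of_gt hrt2pos), mul_one]
      _ ≤ δ * ((r : ℝ) * t) ^ 2 / ((r : ℝ) * t) ^ 2 :=
          (div_le_div_iff_of_pos_right hrt2pos).mpr (le_trans step upper)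
      _ = δ := by rw [mul_div_assoc, div_self (ne_of_gt hrt2pos), mul_one]
  -- conclusion
  have compl : ∀ s : Fin r → Fin m,
      (if frobNorm (Xᴴ * (truncSketch r p Γ s)ᴴ * (truncSketch r p Γ s * Y) - Xᴴ * Y)
          ≤ (2 * Real.sqrt (2 * ε) + Real.sqrt (2 / (r * δ))) * Real.sqrt φ * FX * FY
        then ∏ i, ptilde (s i) else 0)
      = (∏ i, ptilde (s i))
        - (if ¬ (frobNorm (Xᴴ * (truncSketch r p Γ s)ᴴ * (truncSketch r p Γ s * Y) - Xᴴ * Y)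
            ≤ (2 * Real.sqrt (2 * ε) + Real.sqrt (2 / (r * δ))) * Real.sqrt φ * FX * FY)
          then ∏ i, ptilde (s i) else 0) := by
    intro s
    by_cases hs : frobNorm (Xᴴ * (truncSketch r p Γ s)ᴴ * (truncSketch r p Γ s * Y) - Xᴴ * Y)
        ≤ (2 * Real.sqrt (2 * ε) + Real.sqrt (2 / (r * δ))) * Real.sqrt φ * FX * FY
    · rw [if_pos hs, if_neg (not_not_intro hs), sub_zero]
    · rw [if_neg hs, if_pos hs, sub_self]
  rw [Finset.sum_congr rfl fun s _ => compl s, Finset.sum_sub_distrib, sum_w]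
  linarith [markov]
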